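/- Let k ≥ 1 be a natural number. For every finitely supported function u : ℕ → ℂ with u(0) = 0 (where ℕ includes 0), one has ∑_{n=1}^{∞} |u(n) − u(n−1)|² n^{2k} ≥ ((2k−1)²/4) · ∑_{n=1}^{∞} (|u(n)|²/n²) · n^{2k}. -/

import Mathlib

open scoped BigOperators

/-- `(y+2)^m + y^m ≥ 2 (y+1)^m` for `y ≥ 0`. -/
lemma pwh_aux1 (m : ℕ) (y : ℝ) (hy : 0 ≤ y) :
    2 * (y + 1) ^ m ≤ (y + 2) ^ m + y ^ m := by
  induction m with
  | zero => norm_num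
  | succ m ih =>
    have hmono : y ^ m ≤ (y + 2) ^ m :=
      pow_le_pow_left₀ hy (by linarith) m
    have h1 : (y + 2) ^ (m + 1) + y ^ (m + 1)
        = (y + 1) * ((y + 2) ^ m + y ^ m) + ((y + 2) ^ m - y ^ m) := by ring
    have h3 := mul_le_mul_of_nonneg_left ih (by linarith : (0:ℝ) ≤ y + 1)
    have e : (y + 1) * (2 * (y + 1) ^ m) = 2 * (y + 1) ^ (m + 1) := by
      rw [pow_succ]; ring
    rw [e] at h3
    linarith

/-- `(y+2)^(j+1) - y^(j+1) ≥ 2 (j+1) (y+1)^j` for `y ≥ 0`. -/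
lemma pwh_aux2 (j : ℕ) (y : ℝ) (hy : 0 ≤ y) :
    2 * ((j : ℝ) + 1) * (y + 1) ^ j ≤ (y + 2) ^ (j + 1) - y ^ (j + 1) := by
  induction j with
  | zero => norm_num
  | succ j ih =>
    have h1 := pwh_aux1 (j + 1) y hy
    have h2 : (y + 2) ^ (j + 1 + 1) - y ^ (j + 1 + 1)
        = (y + 1) * ((y + 2) ^ (j + 1) - y ^ (j + 1))
          + ((y + 2) ^ (j + 1) + y ^ (j + 1)) := by ring
    have h3 := mul_le_mul_of_nonneg_left ih (by linarith : (0:ℝ) ≤ y + 1)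
    have e : (y + 1) * (2 * ((j:ℝ) + 1) * (y + 1) ^ j)
        = 2 * ((j:ℝ) + 1) * (y + 1) ^ (j + 1) := by
      rw [pow_succ]; ring
    rw [e] at h3
    push_cast
    linarith

/-- key discrete inequality. -/
lemma pwh_aux3 (j : ℕ) (y : ℝ) (hy : 0 ≤ y) :
    (2 * (j : ℝ) + 1) * ((y + 1) ^ j * (y + 1) ^ j)
      ≤ (y + 1) ^ j * (y + 2) ^ (j + 1) - y ^ j * (y + 1) ^ (j + 1) := by
  have h2 := pwh_aux2 j y hy
  have h3 : y ^ j ≤ (y + 1) ^ j := pow_le_pow_left₀ hy (by linarith) j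
  have hyj : (0:ℝ) ≤ (y + 1) ^ j := pow_nonneg (by linarith) j
  have inner : (2 * (j : ℝ) + 1) * (y + 1) ^ j
      ≤ (y + 2) ^ (j + 1) - y ^ j * (y + 1) := by
    have h4 : y ^ (j + 1) = y ^ j * y := pow_succ y j
    nlinarith [h2, h3]
  have := mul_le_mul_of_nonneg_left inner hyj
  have h5 : (y + 1) ^ (j + 1) = (y + 1) ^ j * (y + 1) := pow_succ (y + 1) j
  nlinarith [this]

/-- coefficient inequality for the summation-by-parts argument. -/
lemma pwh_keycoef (j : ℕ) (y : ℝ) (hy : 0 ≤ y) :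
    ((2 * (j : ℝ) + 1) ^ 2 / 4) * ((y + 1) ^ (2 * (j + 1)) / (y + 1) ^ 2)
      ≤ ((2 * (j : ℝ) + 1) / 2 * (y + 1) ^ j * (y + 1 + 1) ^ (j + 1)
          - (2 * (j : ℝ) + 1) / 2 * y ^ j * (y + 1) ^ (j + 1))
        - ((2 * (j : ℝ) + 1) / 2 * (y + 1) ^ j * (y + 1 + 1) ^ (j + 1)) ^ 2
            / (y + 1 + 1) ^ (2 * (j + 1)) := by
  set c : ℝ := (2 * (j : ℝ) + 1) / 2 with hc
  have hc0 : 0 < c := by positivity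
  have hx1 : (0:ℝ) < y + 1 := by linarith
  have hx2 : (0:ℝ) < y + 1 + 1 := by linarith
  have e1 : (y + 1) ^ (2 * (j + 1)) / (y + 1) ^ 2 = (y + 1) ^ j * (y + 1) ^ j := by
    rw [div_eq_iff (by positivity : ((y:ℝ) + 1) ^ 2 ≠ 0)]
    ring
  have e2 : (c * (y + 1) ^ j * (y + 1 + 1) ^ (j + 1)) ^ 2 / (y + 1 + 1) ^ (2 * (j + 1))
      = c ^ 2 * ((y + 1) ^ j * (y + 1) ^ j) := by
    rw [div_eq_iff (by positivity : ((y:ℝ) + 1 + 1) ^ (2 * (j + 1)) ≠ 0)]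
    ring
  rw [e1, e2]
  have h3 := pwh_aux3 j y hy
  have h4 := mul_le_mul_of_nonneg_left h3 hc0.le
  have hcc : (2 * (j : ℝ) + 1) ^ 2 / 4 = c ^ 2 := by rw [hc]; ring
  rw [hcc]
  have h6 : 2 * (c ^ 2 * ((y + 1) ^ j * (y + 1) ^ j))
      ≤ c * ((y + 1) ^ j * (y + 2) ^ (j + 1) - y ^ j * (y + 1) ^ (j + 1)) := by
    calc 2 * (c ^ 2 * ((y + 1) ^ j * (y + 1) ^ j))
        = c * ((2 * (j : ℝ) + 1) * ((y + 1) ^ j * (y + 1) ^ j)) := by rw [hc]; ring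
      _ ≤ _ := h4
  have e3 : y + 1 + 1 = y + 2 := by ring
  rw [e3]
  linarith

/-- telescoping identity. -/
lemma pwh_tele (A H : ℕ → ℝ) (N : ℕ) :
    ∑ n ∈ Finset.range (N + 1), H n * (A n - A (n + 1))
      = H 0 * A 0 - H N * A (N + 1)
        + ∑ n ∈ Finset.range N, (H (n + 1) - H n) * A (n + 1) := by
  induction N with
  | zero => simp [Finset.sum_range_one]; ring
  | succ N ih =>
    rw [Finset.sum_range_succ, ih, Finset.sum_range_succ]
    ring

/-- pointwise Cauchy–Schwarz step. -/
lemma pwh_pointw (a b d h p : ℝ) (ha : 0 ≤ a) (hb : 0 ≤ b) (hd : 0 ≤ d)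
    (hh : 0 ≤ h) (hp : 0 < p) (hab : a ≤ b + d) :
    h * (a ^ 2 - b ^ 2) - h ^ 2 / p * a ^ 2 ≤ p * d ^ 2 := by
  have h1 : a ^ 2 - b ^ 2 ≤ 2 * a * d := by
    rcases le_total a b with hba | hba
    · nlinarith
    · nlinarith [mul_nonneg (sub_nonneg.mpr hba) hd]
  have h2 : p * h * (a ^ 2 - b ^ 2) ≤ p * p * d ^ 2 + h ^ 2 * a ^ 2 := by
    have h3 : p * h * (a ^ 2 - b ^ 2) ≤ p * h * (2 * a * d) :=
      mul_le_mul_of_nonneg_left h1 (by positivity)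
    nlinarith [sq_nonneg (p * d - h * a)]
  rw [← sub_nonneg]
  have e : p * d ^ 2 - (h * (a ^ 2 - b ^ 2) - h ^ 2 / p * a ^ 2)
      = (p * p * d ^ 2 + h ^ 2 * a ^ 2 - p * h * (a ^ 2 - b ^ 2)) / p := by
    field_simp
    ring
  rw [e]
  apply div_nonneg _ hp.le
  linarith

/-- main finite-sum inequality. -/
lemma pwh_finsum (j M : ℕ) (u : ℕ → ℂ) (h0 : u 0 = 0) (hM : u (M + 1) = 0) :
    ((2 * (j : ℝ) + 1) ^ 2 / 4) *
        ∑ n ∈ Finset.range (M + 1),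
          (‖u (n + 1)‖ ^ 2 / ((n : ℝ) + 1) ^ 2) * ((n : ℝ) + 1) ^ (2 * (j + 1))
      ≤ ∑ n ∈ Finset.range (M + 1),
          ‖u (n + 1) - u n‖ ^ 2 * ((n : ℝ) + 1) ^ (2 * (j + 1)) := by
  set c : ℝ := (2 * (j : ℝ) + 1) / 2 with hc
  have hc0 : 0 < c := by positivity
  set H : ℕ → ℝ := fun n => c * (n : ℝ) ^ j * ((n : ℝ) + 1) ^ (j + 1) with hH
  set A : ℕ → ℝ := fun n => ‖u n‖ ^ 2 with hA
  set P : ℕ → ℝ := fun n => ((n : ℝ) + 1) ^ (2 * (j + 1)) with hP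
  have hHn : ∀ n, 0 ≤ H n := by
    intro n; rw [hH]; positivity
  have hPn : ∀ n, (0:ℝ) < P n := by
    intro n; rw [hP]; positivity
  have hA0 : A 0 = 0 := by simp [hA, h0]
  have hAM : A (M + 1) = 0 := by simp [hA, hM]
  have hAnn : ∀ n, 0 ≤ A n := by intro n; rw [hA]; positivity
  -- step 1: pointwise inequality
  have step1 : ∀ n, H n * (A n - A (n + 1)) - (H n) ^ 2 / (P n) * A n
      ≤ ‖u (n + 1) - u n‖ ^ 2 * ((n : ℝ) + 1) ^ (2 * (j + 1)) := by
    intro n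
    have hab : ‖u n‖ ≤ ‖u (n + 1)‖ + ‖u (n + 1) - u n‖ := by
      calc ‖u n‖ = ‖u (n + 1) - (u (n + 1) - u n)‖ := by congr 1; ring
        _ ≤ ‖u (n + 1)‖ + ‖u (n + 1) - u n‖ := norm_sub_le _ _
    have := pwh_pointw (‖u n‖) (‖u (n + 1)‖) (‖u (n + 1) - u n‖) (H n) (P n)
      (norm_nonneg _) (norm_nonneg _) (norm_nonneg _) (hHn n) (hPn n) hab
    have hP' : P n = ((n : ℝ) + 1) ^ (2 * (j + 1)) := rfl
    rw [hA]
    simp only []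
    nlinarith [this]
  have sum1 : ∑ n ∈ Finset.range (M + 1),
        (H n * (A n - A (n + 1)) - (H n) ^ 2 / (P n) * A n)
      ≤ ∑ n ∈ Finset.range (M + 1),
          ‖u (n + 1) - u n‖ ^ 2 * ((n : ℝ) + 1) ^ (2 * (j + 1)) :=
    Finset.sum_le_sum fun n _ => step1 n
  -- step 2: rewrite the left sum by telescoping
  have E : ∑ n ∈ Finset.range (M + 1),
        (H n * (A n - A (n + 1)) - (H n) ^ 2 / (P n) * A n)
      = ∑ n ∈ Finset.range M,
          ((H (n + 1) - H n) * A (n + 1) - (H (n + 1)) ^ 2 / (P (n + 1)) * A (n + 1)) := by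
    rw [Finset.sum_sub_distrib, pwh_tele A H M,
      Finset.sum_range_succ' (fun n => (H n) ^ 2 / (P n) * A n) M,
      hA0, hAM, Finset.sum_sub_distrib]
    ring
  -- step 3: coefficient bound per term
  have key : ∀ n : ℕ,
      ((2 * (j : ℝ) + 1) ^ 2 / 4) *
          ((‖u (n + 1)‖ ^ 2 / ((n : ℝ) + 1) ^ 2) * ((n : ℝ) + 1) ^ (2 * (j + 1)))
        ≤ (H (n + 1) - H n) * A (n + 1) - (H (n + 1)) ^ 2 / (P (n + 1)) * A (n + 1) := by
    intro n
    have hkc := pwh_keycoef j (n : ℝ) (Nat.cast_nonneg n)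
    have hHn1 : H (n + 1) = c * ((n : ℝ) + 1) ^ j * ((n : ℝ) + 1 + 1) ^ (j + 1) := by
      rw [hH]; push_cast; ring
    have hHn0 : H n = c * (n : ℝ) ^ j * ((n : ℝ) + 1) ^ (j + 1) := rfl
    have hPn1 : P (n + 1) = ((n : ℝ) + 1 + 1) ^ (2 * (j + 1)) := by
      rw [hP]; push_cast; ring_nf
    have hmul := mul_le_mul_of_nonneg_right hkc (hAnn (n + 1))
    rw [← hc] at hmul
    rw [hHn1, hHn0, hPn1]
    have hArw : A (n + 1) = ‖u (n + 1)‖ ^ 2 := rfl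
    rw [hArw] at hmul ⊢
    calc ((2 * (j : ℝ) + 1) ^ 2 / 4) *
          ((‖u (n + 1)‖ ^ 2 / ((n : ℝ) + 1) ^ 2) * ((n : ℝ) + 1) ^ (2 * (j + 1)))
        = ((2 * (j : ℝ) + 1) ^ 2 / 4) *
            (((n : ℝ) + 1) ^ (2 * (j + 1)) / ((n : ℝ) + 1) ^ 2) * ‖u (n + 1)‖ ^ 2 := by
          ring
      _ ≤ ((c * ((n : ℝ) + 1) ^ j * ((n : ℝ) + 1 + 1) ^ (j + 1)
              - c * (n : ℝ) ^ j * ((n : ℝ) + 1) ^ (j + 1))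
            - (c * ((n : ℝ) + 1) ^ j * ((n : ℝ) + 1 + 1) ^ (j + 1)) ^ 2
                / ((n : ℝ) + 1 + 1) ^ (2 * (j + 1))) * ‖u (n + 1)‖ ^ 2 := hmul
      _ = (c * ((n : ℝ) + 1) ^ j * ((n : ℝ) + 1 + 1) ^ (j + 1)
              - c * (n : ℝ) ^ j * ((n : ℝ) + 1) ^ (j + 1)) * ‖u (n + 1)‖ ^ 2
            - (c * ((n : ℝ) + 1) ^ j * ((n : ℝ) + 1 + 1) ^ (j + 1)) ^ 2
                / ((n : ℝ) + 1 + 1) ^ (2 * (j + 1)) * ‖u (n + 1)‖ ^ 2 := by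
          ring
  -- assemble
  rw [Finset.mul_sum]
  have last0 : ((2 * (j : ℝ) + 1) ^ 2 / 4) *
      ((‖u (M + 1)‖ ^ 2 / ((M : ℝ) + 1) ^ 2) * ((M : ℝ) + 1) ^ (2 * (j + 1))) = 0 := by
    rw [hM]; simp
  calc ∑ n ∈ Finset.range (M + 1),
        ((2 * (j : ℝ) + 1) ^ 2 / 4) *
          ((‖u (n + 1)‖ ^ 2 / ((n : ℝ) + 1) ^ 2) * ((n : ℝ) + 1) ^ (2 * (j + 1)))
      = ∑ n ∈ Finset.range M,
          ((2 * (j : ℝ) + 1) ^ 2 / 4) *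
            ((‖u (n + 1)‖ ^ 2 / ((n : ℝ) + 1) ^ 2) * ((n : ℝ) + 1) ^ (2 * (j + 1))) := by
        rw [Finset.sum_range_succ, last0, add_zero]
    _ ≤ ∑ n ∈ Finset.range M,
          ((H (n + 1) - H n) * A (n + 1) - (H (n + 1)) ^ 2 / (P (n + 1)) * A (n + 1)) :=
        Finset.sum_le_sum fun n _ => key n
    _ = ∑ n ∈ Finset.range (M + 1),
          (H n * (A n - A (n + 1)) - (H n) ^ 2 / (P n) * A n) := E.symm
    _ ≤ _ := sum1

theorem power_weight_hardy
    (k : ℕ) (hk : 1 ≤ k) (u : ℕ → ℂ)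
    (hu : (Function.support u).Finite) (h0 : u 0 = 0) :
    ∑' n : ℕ, ‖u (n + 1) - u n‖ ^ 2 * ((n : ℝ) + 1) ^ (2 * k) ≥
      ((2 * (k : ℝ) - 1) ^ 2 / 4) *
        ∑' n : ℕ, (‖u (n + 1)‖ ^ 2 / ((n : ℝ) + 1) ^ 2) * ((n : ℝ) + 1) ^ (2 * k) := by
  obtain ⟨j, rfl⟩ : ∃ j, k = j + 1 := ⟨k - 1, (Nat.succ_pred_eq_of_pos hk).symm⟩
  obtain ⟨B, hB⟩ := hu.bddAbove
  set M : ℕ := B + 1 with hMdef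
  have hzero : ∀ n, M ≤ n → u n = 0 := by
    intro n hn
    by_contra h
    have := hB (Function.mem_support.mpr h)
    change n ≤ B at this
    omega
  have hM1 : u (M + 1) = 0 := hzero _ (by omega)
  have h1 : ∑' n : ℕ, ‖u (n + 1) - u n‖ ^ 2 * ((n : ℝ) + 1) ^ (2 * (j + 1))
      = ∑ n ∈ Finset.range (M + 1),
          ‖u (n + 1) - u n‖ ^ 2 * ((n : ℝ) + 1) ^ (2 * (j + 1)) := by
    apply tsum_eq_sum
    intro n hn
    have hn' : M + 1 ≤ n := by
      by_contra h
      exact hn (Finset.mem_range.mpr (by omega))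
    rw [hzero n (by omega), hzero (n + 1) (by omega)]
    simp
  have h2 : ∑' n : ℕ, (‖u (n + 1)‖ ^ 2 / ((n : ℝ) + 1) ^ 2) * ((n : ℝ) + 1) ^ (2 * (j + 1))
      = ∑ n ∈ Finset.range (M + 1),
          (‖u (n + 1)‖ ^ 2 / ((n : ℝ) + 1) ^ 2) * ((n : ℝ) + 1) ^ (2 * (j + 1)) := by
    apply tsum_eq_sum
    intro n hn
    have hn' : M + 1 ≤ n := by
      by_contra h
      exact hn (Finset.mem_range.mpr (by omega))
    rw [hzero (n + 1) (by omega)]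
    simp
  rw [ge_iff_le, h1, h2]
  have hC : (2 * ((j + 1 : ℕ) : ℝ) - 1) ^ 2 / 4 = (2 * (j : ℝ) + 1) ^ 2 / 4 := by
    push_cast; ring
  rw [hC]
  exact pwh_finsum j M u h0 hM1
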